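/- Let C be a family of sets and κ an infinite cardinal. If the collection of all unions of subfamilies of C of size < κ is <κ-Noetherian (i.e., every subcollection well-ordered by strict inclusion has size < κ), then every subfamily of C of size ≥ κ contains a κ-sized subfamily C₁ with a subfamily C₀ of size < κ such that ⋃C₀ ⊇ ⋃C₁. -/

import Mathlib

universe u

/-- A family of sets is `<κ`-Noetherian if every subfamily well-ordered by
strict inclusion has cardinality `< κ`. -/
def IsLtNoetherian {X : Type u} (C : Set (Set X)) (κ : Cardinal.{u}) : Prop :=
  ∀ D : Set (Set X), D ⊆ C →
    IsWellOrder D (fun A B => (A : Set X) ⊂ (B : Set X)) → Cardinal.mk D < κ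

open Cardinal Set Ordinal

/-- Transfinite iteration of a choice function along `κ.ord.ToType`. -/
noncomputable def buildF {X : Type u} (κ : Cardinal.{u}) (g' : Set (Set X) → Set X) :
    κ.ord.ToType → Set X :=
  fun α => g' (Set.range fun β : Set.Iio α => buildF κ g' β.1)
termination_by α => α
decreasing_by exact β.2

lemma buildF_eq {X : Type u} (κ : Cardinal.{u}) (g' : Set (Set X) → Set X)
    (α : κ.ord.ToType) :
    buildF κ g' α = g' (buildF κ g' '' Set.Iio α) := by
  rw [buildF, Set.image_eq_range]

theorem stmt0 {X : Type u} (C : Set (Set X)) (κ : Cardinal.{u})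
    (hκ : Cardinal.aleph0 ≤ κ)
    (h : IsLtNoetherian
      {U : Set X | ∃ S : Set (Set X), S ⊆ C ∧ Cardinal.mk S < κ ∧ U = ⋃₀ S} κ) :
    ∀ C₂ : Set (Set X), C₂ ⊆ C → κ ≤ Cardinal.mk C₂ →
      ∃ C₁ ⊆ C₂, Cardinal.mk C₁ = κ ∧
        ∃ C₀ ⊆ C₁, Cardinal.mk C₀ < κ ∧ ⋃₀ C₁ ⊆ ⋃₀ C₀ := by
  intro C₂ hC₂C hκC₂
  by_cases hex : ∃ S, S ⊆ C₂ ∧ Cardinal.mk S < κ ∧ ∀ A ∈ C₂, A ⊆ ⋃₀ S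
  · obtain ⟨S, hSC₂, hScard, hScov⟩ := hex
    obtain ⟨T, hTC₂, hTcard⟩ := Cardinal.le_mk_iff_exists_subset.mp hκC₂
    refine ⟨S ∪ T, union_subset hSC₂ hTC₂, ?_, S, subset_union_left, hScard, ?_⟩
    · apply le_antisymm
      · calc Cardinal.mk (↥(S ∪ T)) ≤ Cardinal.mk S + Cardinal.mk T := mk_union_le _ _
          _ ≤ κ + κ := add_le_add hScard.le hTcard.le
          _ = κ := Cardinal.add_eq_self hκ
      · rw [← hTcard]
        exact mk_le_mk_of_subset subset_union_right
    · rintro x ⟨A, hA, hxA⟩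
      exact hScov A (union_subset hSC₂ hTC₂ hA) hxA
  · exfalso
    classical
    push_neg at hex
    have hC₂ne : C₂.Nonempty := by
      rw [nonempty_iff_ne_empty]
      rintro rfl
      rw [Cardinal.mk_emptyCollection] at hκC₂
      exact (Cardinal.aleph0_pos.trans_le hκ).ne' (le_antisymm (hκC₂.trans bot_le) bot_le)
    obtain ⟨A₀, hA₀⟩ := hC₂ne
    obtain ⟨g', hg'mem, hg'not⟩ :
        ∃ g' : Set (Set X) → Set X, (∀ S, g' S ∈ C₂) ∧
          (∀ S, S ⊆ C₂ → Cardinal.mk S < κ → ¬ g' S ⊆ ⋃₀ S) := by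
      refine ⟨fun S => if hS : S ⊆ C₂ ∧ Cardinal.mk S < κ
        then (hex S hS.1 hS.2).choose else A₀, fun S => ?_, fun S h1 h2 => ?_⟩
      · dsimp only
        split
        next hS => exact (hex S hS.1 hS.2).choose_spec.1
        next => exact hA₀
      · dsimp only
        rw [dif_pos ⟨h1, h2⟩]
        exact (hex S h1 h2).choose_spec.2
    have hfmem : ∀ α : κ.ord.ToType, buildF κ g' α ∈ C₂ := by
      intro α
      rw [buildF_eq]
      exact hg'mem _
    have hsub : ∀ α : κ.ord.ToType, buildF κ g' '' Set.Iio α ⊆ C₂ := by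
      rintro α _ ⟨β, _, rfl⟩
      exact hfmem β
    have hcard : ∀ α : κ.ord.ToType, Cardinal.mk (buildF κ g' '' Set.Iio α) < κ :=
      fun α => mk_image_le.trans_lt (Cardinal.mk_Iio_ord_toType α)
    have hnot : ∀ α : κ.ord.ToType,
        ¬ buildF κ g' α ⊆ ⋃₀ (buildF κ g' '' Set.Iio α) := by
      intro α
      rw [buildF_eq]
      exact hg'not _ (hsub α) (hcard α)
    set U : κ.ord.ToType → Set X := fun α => ⋃₀ (buildF κ g' '' Set.Iio α) with hU
    have hUmono : StrictMono U := by
      intro a b hab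
      have h1 : U a ≤ U b :=
        sUnion_subset_sUnion (image_mono (Iio_subset_Iio hab.le))
      refine lt_of_le_of_ne h1 fun he => hnot a ?_
      have h2 : buildF κ g' a ⊆ U b :=
        subset_sUnion_of_mem ⟨a, hab, rfl⟩
      rw [← he] at h2
      exact h2
    have hD : Set.range U ⊆
        {V : Set X | ∃ S : Set (Set X), S ⊆ C ∧ Cardinal.mk S < κ ∧ V = ⋃₀ S} := by
      rintro _ ⟨α, rfl⟩
      exact ⟨_, (hsub α).trans hC₂C, hcard α, rfl⟩
    have iso : ((· < ·) : κ.ord.ToType → κ.ord.ToType → Prop) ≃r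
        (fun A B : ↥(Set.range U) => (A : Set X) ⊂ (B : Set X)) := by
      refine ⟨Equiv.ofInjective U hUmono.injective, ?_⟩
      intro a b
      show (U a : Set X) ⊂ U b ↔ a < b
      rw [← Set.lt_iff_ssubset]
      exact hUmono.lt_iff_lt
    haveI : IsWellOrder κ.ord.ToType (· < ·) := isWellOrder_lt
    have hwo : IsWellOrder ↥(Set.range U)
        (fun A B : ↥(Set.range U) => (A : Set X) ⊂ (B : Set X)) :=
      iso.symm.toRelEmbedding.isWellOrder
    have hlt := h (Set.range U) hD hwo
    have hEq : Cardinal.mk ↥(Set.range U) = κ := by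
      rw [Cardinal.mk_range_eq _ hUmono.injective, Cardinal.mk_toType, Cardinal.card_ord]
    rw [hEq] at hlt
    exact lt_irrefl κ hlt
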